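/- For s ≥ 1/2 and n ≥ 1, define T_n^s := ∫_{−π}^{π}∫_{−π}^{π} |sin(n(u−v)/2)|² / |sin((u−v)/2)| · (log₂(π/|sin((u−v)/2)|))^{2s−1} du dv and R_n^s := ∫₀¹ |sin(πnt/2)|²/t · (log₂(2/t))^{2s−1} dt. Then 4π·R_n^s ≤ T_n^s ≤ 8π²·(log₂ π)^{2s−1}·R_n^s. -/

import Mathlib

open Set MeasureTheory Real

section Aux
variable (n : ℕ) (s : ℝ)

noncomputable def F14 (x : ℝ) : ℝ :=
  |Real.sin (n * x / 2)| ^ 2 / |Real.sin (x / 2)| *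
    Real.logb 2 (π / |Real.sin (x / 2)|) ^ (2 * s - 1)

lemma F14_even (x : ℝ) : F14 n s (-x) = F14 n s x := by
  unfold F14
  have h1 : ((n : ℝ) * (-x) / 2) = -((n : ℝ) * x / 2) := by ring
  have h2 : ((-x : ℝ) / 2) = -(x / 2) := by ring
  rw [h1, h2, Real.sin_neg, Real.sin_neg, abs_neg, abs_neg]

lemma F14_periodic : Function.Periodic (F14 n s) (2 * π) := by
  intro x
  unfold F14
  have h1 : ((n : ℝ) * (x + 2 * π) / 2) = (n : ℝ) * x / 2 + n * π := by ring
  have h2 : ((x + 2 * π) / 2) = x / 2 + π := by ring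
  rw [h1, h2, Real.sin_add_pi, Real.sin_add_nat_mul_pi, abs_neg, abs_mul, abs_pow, abs_neg,
    abs_one, one_pow, one_mul]

end Aux

lemma F14_bounds (n : ℕ) (s : ℝ) (hs : 1 / 2 ≤ s) {t : ℝ} (ht0 : 0 < t) (ht1 : t ≤ 1) :
    2 / π * (|Real.sin (π * n * t / 2)| ^ 2 / t * Real.logb 2 (2 / t) ^ (2 * s - 1))
      ≤ F14 n s (π * t) ∧
    F14 n s (π * t) ≤ Real.logb 2 π ^ (2 * s - 1) *
      (|Real.sin (π * n * t / 2)| ^ 2 / t * Real.logb 2 (2 / t) ^ (2 * s - 1)) := by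
  have hπ := Real.pi_pos
  have he : (0:ℝ) ≤ 2 * s - 1 := by linarith
  have hθ0 : 0 ≤ π * t / 2 := by positivity
  have hθπ : π * t / 2 ≤ π / 2 := by nlinarith
  have hsinle : Real.sin (π * t / 2) ≤ π * t / 2 := Real.sin_le hθ0
  have hsinge : t ≤ Real.sin (π * t / 2) := by
    have := Real.mul_le_sin hθ0 hθπ
    have h2 : 2 / π * (π * t / 2) = t := by field_simp
    linarith [h2 ▸ this]
  have hsinpos : 0 < Real.sin (π * t / 2) := lt_of_lt_of_le ht0 hsinge
  have hsin1 : Real.sin (π * t / 2) ≤ 1 := Real.sin_le_one _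
  have habs : |Real.sin (π * t / 2)| = Real.sin (π * t / 2) := abs_of_pos hsinpos
  have hargn : ((n : ℝ) * (π * t) / 2) = π * n * t / 2 := by ring
  have harg : ((π * t) / 2) = π * t / 2 := by ring
  set A := |Real.sin (π * n * t / 2)| ^ 2 with hA
  have hA0 : 0 ≤ A := by positivity
  have hF : F14 n s (π * t) = A / Real.sin (π * t / 2) *
      Real.logb 2 (π / Real.sin (π * t / 2)) ^ (2 * s - 1) := by
    unfold F14; rw [hargn, harg, habs]
  -- log bounds
  have hlog2t0 : (0:ℝ) ≤ Real.logb 2 (2 / t) := by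
    apply Real.logb_nonneg one_lt_two
    rw [le_div_iff₀ ht0]; linarith
  have hlow_log : Real.logb 2 (2 / t) ≤ Real.logb 2 (π / Real.sin (π * t / 2)) := by
    apply Real.logb_le_logb_of_le one_lt_two (by positivity)
    rw [div_le_div_iff₀ ht0 hsinpos]
    nlinarith
  have hlogS0 : (0:ℝ) ≤ Real.logb 2 (π / Real.sin (π * t / 2)) := le_trans hlog2t0 hlow_log
  have hlogpi1 : (1:ℝ) ≤ Real.logb 2 π := by
    have := Real.logb_le_logb_of_le (b := 2) (x := 2) (y := π) one_lt_two (by norm_num)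
      (by linarith [Real.two_le_pi])
    simpa using this
  have hup_log : Real.logb 2 (π / Real.sin (π * t / 2)) ≤
      Real.logb 2 π * Real.logb 2 (2 / t) := by
    have h1 : Real.logb 2 (π / Real.sin (π * t / 2)) ≤ Real.logb 2 (π / t) := by
      apply Real.logb_le_logb_of_le one_lt_two (by positivity)
      apply div_le_div_of_nonneg_left hπ.le ht0 hsinge
    have h2 : Real.logb 2 (π / t) = Real.logb 2 π - Real.logb 2 t := by
      rw [Real.logb_div (by positivity) (ne_of_gt ht0)]
    have h3 : Real.logb 2 (2 / t) = 1 - Real.logb 2 t := by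
      rw [Real.logb_div (by norm_num) (ne_of_gt ht0), Real.logb_self_eq_one] <;> norm_num
    have hL : 0 ≤ -Real.logb 2 t := by
      have := Real.logb_nonpos (b := 2) one_lt_two ht0.le ht1
      linarith
    nlinarith
  constructor
  · rw [hF]
    have hdiv : 2 / π * (A / t) ≤ A / Real.sin (π * t / 2) := by
      have : A / (π * t / 2) ≤ A / Real.sin (π * t / 2) :=
        div_le_div_of_nonneg_left hA0 hsinpos hsinle
      have heq : A / (π * t / 2) = 2 / π * (A / t) := by field_simp
      linarith [heq ▸ this]
    have hrpow : Real.logb 2 (2 / t) ^ (2 * s - 1) ≤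
        Real.logb 2 (π / Real.sin (π * t / 2)) ^ (2 * s - 1) :=
      Real.rpow_le_rpow hlog2t0 hlow_log he
    have := mul_le_mul hdiv hrpow (Real.rpow_nonneg hlog2t0 _) (by positivity)
    calc 2 / π * (A / t * Real.logb 2 (2 / t) ^ (2 * s - 1))
        = 2 / π * (A / t) * Real.logb 2 (2 / t) ^ (2 * s - 1) := by ring
      _ ≤ _ := this
  · rw [hF]
    have hdiv : A / Real.sin (π * t / 2) ≤ A / t :=
      div_le_div_of_nonneg_left hA0 ht0 hsinge
    have hrpow : Real.logb 2 (π / Real.sin (π * t / 2)) ^ (2 * s - 1) ≤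
        (Real.logb 2 π * Real.logb 2 (2 / t)) ^ (2 * s - 1) :=
      Real.rpow_le_rpow hlogS0 hup_log he
    have hmul : (Real.logb 2 π * Real.logb 2 (2 / t)) ^ (2 * s - 1) =
        Real.logb 2 π ^ (2 * s - 1) * Real.logb 2 (2 / t) ^ (2 * s - 1) :=
      Real.mul_rpow (by linarith) hlog2t0
    have := mul_le_mul hdiv (hmul ▸ hrpow) (Real.rpow_nonneg hlogS0 _)
      (by positivity)
    calc A / Real.sin (π * t / 2) * Real.logb 2 (π / Real.sin (π * t / 2)) ^ (2 * s - 1)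
        ≤ A / t * (Real.logb 2 π ^ (2 * s - 1) * Real.logb 2 (2 / t) ^ (2 * s - 1)) := this
      _ = _ := by ring

/-- For `s ≥ 1/2` and `n ≥ 1`, with
`T = ∫∫_{[−π,π]²} |sin(n(u−v)/2)|²/|sin((u−v)/2)| (log₂(π/|sin((u−v)/2)|))^{2s−1} du dv`
and `R = ∫₀¹ |sin(πnt/2)|²/t (log₂(2/t))^{2s−1} dt` (both finite),
`4π R ≤ T ≤ 8π² (log₂ π)^{2s−1} R`. -/
theorem stmt14 (s : ℝ) (hs : 1 / 2 ≤ s) (n : ℕ) (hn : 1 ≤ n) (T R : ℝ)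
    (hT : T = ∫ p in Icc (-π) π ×ˢ Icc (-π) π,
      |Real.sin (n * (p.1 - p.2) / 2)| ^ 2 / |Real.sin ((p.1 - p.2) / 2)| *
        Real.logb 2 (π / |Real.sin ((p.1 - p.2) / 2)|) ^ (2 * s - 1))
    (hR : R = ∫ t in Ioo (0 : ℝ) 1,
      |Real.sin (π * n * t / 2)| ^ 2 / t * Real.logb 2 (2 / t) ^ (2 * s - 1))
    (hTint : IntegrableOn
      (fun p : ℝ × ℝ =>
        |Real.sin (n * (p.1 - p.2) / 2)| ^ 2 / |Real.sin ((p.1 - p.2) / 2)| *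
          Real.logb 2 (π / |Real.sin ((p.1 - p.2) / 2)|) ^ (2 * s - 1))
      (Icc (-π) π ×ˢ Icc (-π) π))
    (hRint : IntegrableOn
      (fun t : ℝ =>
        |Real.sin (π * n * t / 2)| ^ 2 / t * Real.logb 2 (2 / t) ^ (2 * s - 1))
      (Ioo 0 1)) :
    4 * π * R ≤ T ∧ T ≤ 8 * π ^ 2 * Real.logb 2 π ^ (2 * s - 1) * R := by
  have hπ := Real.pi_pos
  set f := F14 n s with hfdef
  set g : ℝ → ℝ := fun t =>
    |Real.sin (π * n * t / 2)| ^ 2 / t * Real.logb 2 (2 / t) ^ (2 * s - 1) with hgdef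
  have hper : Function.Periodic f (2 * π) := F14_periodic n s
  -- rewrite hT and hTint in terms of f
  have hT' : T = ∫ p in Icc (-π) π ×ˢ Icc (-π) π, f (p.1 - p.2) := hT
  have hTint' : IntegrableOn (fun p : ℝ × ℝ => f (p.1 - p.2))
      (Icc (-π) π ×ˢ Icc (-π) π) := hTint
  clear hT hTint
  -- Fubini
  have hvol : (volume : Measure (ℝ × ℝ)) = (volume : Measure ℝ).prod volume :=
    (Measure.volume_eq_prod ℝ ℝ)
  have h1 : T = ∫ u in Icc (-π) π, ∫ v in Icc (-π) π, f (u - v) := by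
    rw [hT', hvol]
    exact setIntegral_prod _ (by rwa [IntegrableOn, ← hvol])
  -- inner integral is constant
  have hinner : ∀ u : ℝ, ∫ v in Icc (-π) π, f (u - v) = ∫ x in (-π)..π, f x := by
    intro u
    rw [MeasureTheory.integral_Icc_eq_integral_Ioc,
      ← intervalIntegral.integral_of_le (by linarith : -π ≤ π),
      intervalIntegral.integral_comp_sub_left f u]
    have key := hper.intervalIntegral_add_eq (u - π) (-π)
    rw [show u - -π = u - π + 2 * π by ring]
    rw [key]
    congr 1
    ring
  have h2 : T = 2 * π * ∫ x in (-π)..π, f x := by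
    rw [h1]
    simp only [hinner]
    rw [MeasureTheory.setIntegral_const, Real.volume_real_Icc_of_le (by linarith : -π ≤ π),
      smul_eq_mul]
    congr 1
    ring
  -- integrability of f on [-π, π]
  have hT2 : Integrable (fun p : ℝ × ℝ => f (p.1 - p.2))
      ((volume.restrict (Icc (-π) π)).prod (volume.restrict (Icc (-π) π))) := by
    rwa [Measure.prod_restrict, ← Measure.volume_eq_prod]
  have hne : (volume.restrict (Icc (-π) π)) ≠ 0 := by
    intro h
    rw [Measure.restrict_eq_zero, Real.volume_Icc, ENNReal.ofReal_eq_zero] at h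
    linarith
  haveI : (ae (volume.restrict (Icc (-π) π))).NeBot := ae_neBot.mpr hne
  obtain ⟨v₀, hv₀mem, hv₀⟩ :=
    ((ae_restrict_mem measurableSet_Icc).and hT2.prod_left_ae).exists
  have hii : IntervalIntegrable (fun u => f (u - v₀)) volume (-π) π :=
    (intervalIntegrable_iff_integrableOn_Icc_of_le (by linarith)).mpr hv₀
  have hii2 : IntervalIntegrable f volume (-π + -v₀) (π + -v₀) := by
    have h := hii.comp_sub_right (-v₀)
    simpa [sub_neg_eq_add, add_sub_cancel_right] using h
  have hfwd : ∀ a b : ℝ, IntervalIntegrable f volume a b →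
      IntervalIntegrable f volume (a + 2 * π) (b + 2 * π) := fun a b h => by
    have h2 := h.comp_sub_right (2 * π)
    simpa only [hper.sub_eq] using h2
  have hbwd : ∀ a b : ℝ, IntervalIntegrable f volume a b →
      IntervalIntegrable f volume (a - 2 * π) (b - 2 * π) := fun a b h => by
    have h2 := h.comp_add_right (2 * π)
    simpa only [show ∀ x : ℝ, f (x + 2 * π) = f x from hper] using h2
  have hv1 : -π ≤ v₀ := hv₀mem.1
  have hv2 : v₀ ≤ π := hv₀mem.2
  have hJ : IntervalIntegrable f volume (-π) π := by
    have hB := hfwd _ _ hii2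
    have hC := hbwd _ _ hii2
    have t1 : IntervalIntegrable f volume (-π + -v₀ - 2 * π) (π + -v₀) := by
      apply hC.trans
      rw [show π + -v₀ - 2 * π = -π + -v₀ by ring]
      exact hii2
    have t2 : IntervalIntegrable f volume (-π + -v₀ - 2 * π) (π + -v₀ + 2 * π) := by
      apply t1.trans
      rw [show (-π + -v₀ + 2 * π : ℝ) = π + -v₀ by ring] at hB
      exact hB
    apply t2.mono_set
    rw [Set.uIcc_of_le (by linarith), Set.uIcc_of_le (by linarith)]
    exact Set.Icc_subset_Icc (by linarith) (by linarith)
  -- evenness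
  have hI2 : ∫ x in (-π)..π, f x = 2 * ∫ x in (0:ℝ)..π, f x := by
    have hsplit := intervalIntegral.integral_add_adjacent_intervals
      (hJ.mono_set (by
        rw [Set.uIcc_of_le (by linarith : -π ≤ (0:ℝ)),
          Set.uIcc_of_le (by linarith : -π ≤ π)]
        exact Set.Icc_subset_Icc le_rfl (by linarith)))
      (hJ.mono_set (by
        rw [Set.uIcc_of_le hπ.le, Set.uIcc_of_le (by linarith : -π ≤ π)]
        exact Set.Icc_subset_Icc (by linarith) le_rfl))
    have h := intervalIntegral.integral_comp_neg (a := (0:ℝ)) (b := π) f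
    simp only [neg_zero] at h
    rw [hfdef] at h
    simp only [F14_even] at h
    rw [← hfdef] at h
    linarith [hsplit, h]
  have hI3 : ∫ x in (0:ℝ)..π, f x = π * ∫ t in (0:ℝ)..1, f (π * t) := by
    have h := intervalIntegral.integral_comp_mul_left (a := (0:ℝ)) (b := 1) f
      (ne_of_gt hπ)
    rw [h, smul_eq_mul, show π * (0:ℝ) = 0 by ring, show π * (1:ℝ) = π by ring]
    field_simp
  have hT4 : T = 4 * π ^ 2 * ∫ t in (0:ℝ)..1, f (π * t) := by
    rw [h2, hI2, hI3]; ring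
  have hJset : ∫ t in (0:ℝ)..1, f (π * t) = ∫ t in Ioo (0:ℝ) 1, f (π * t) := by
    rw [intervalIntegral.integral_of_le (by norm_num : (0:ℝ) ≤ 1),
      MeasureTheory.integral_Ioc_eq_integral_Ioo]
  have hJint : IntegrableOn (fun t => f (π * t)) (Ioo (0:ℝ) 1) := by
    have h0 : IntervalIntegrable f volume 0 π := hJ.mono_set (by
      rw [Set.uIcc_of_le hπ.le, Set.uIcc_of_le (by linarith : -π ≤ π)]
      exact Set.Icc_subset_Icc (by linarith) le_rfl)
    have h1 := h0.comp_mul_left (c := π)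
    rw [zero_div, div_self (ne_of_gt hπ)] at h1
    exact (intervalIntegrable_iff_integrableOn_Ioo_of_le (by norm_num)).mp h1
  -- nonnegativity of R
  have hRnn : 0 ≤ R := by
    rw [hR]
    apply setIntegral_nonneg measurableSet_Ioo
    intro t ht
    have hlb : (0:ℝ) ≤ Real.logb 2 (2 / t) := by
      apply Real.logb_nonneg one_lt_two
      rw [le_div_iff₀ ht.1]; linarith [ht.2]
    exact mul_nonneg (div_nonneg (by positivity) ht.1.le) (Real.rpow_nonneg hlb _)
  -- comparison of integrals
  have hlow : 2 / π * R ≤ ∫ t in Ioo (0:ℝ) 1, f (π * t) := by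
    have h := setIntegral_mono_on (hRint.const_mul (2 / π)) hJint measurableSet_Ioo
      (fun t ht => (F14_bounds n s hs ht.1 ht.2.le).1)
    rwa [MeasureTheory.integral_const_mul, ← hR] at h
  have hup : (∫ t in Ioo (0:ℝ) 1, f (π * t)) ≤ Real.logb 2 π ^ (2 * s - 1) * R := by
    have h := setIntegral_mono_on hJint (hRint.const_mul (Real.logb 2 π ^ (2 * s - 1)))
      measurableSet_Ioo (fun t ht => (F14_bounds n s hs ht.1 ht.2.le).2)
    rwa [MeasureTheory.integral_const_mul, ← hR] at h
  have hC0 : 0 ≤ Real.logb 2 π ^ (2 * s - 1) :=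
    Real.rpow_nonneg (Real.logb_nonneg one_lt_two (by linarith [Real.two_le_pi])) _
  rw [hT4, hJset]
  have h4π : (0:ℝ) ≤ 4 * π ^ 2 := by positivity
  constructor
  · have hmul := mul_le_mul_of_nonneg_left hlow h4π
    have hkey : 4 * π ^ 2 * (2 / π * R) = 8 * π * R := by
      field_simp; ring
    have hR4 : 4 * π * R ≤ 8 * π * R := by nlinarith
    linarith
  · have hmul := mul_le_mul_of_nonneg_left hup h4π
    have hCR : (0:ℝ) ≤ Real.logb 2 π ^ (2 * s - 1) * R := mul_nonneg hC0 hRnn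
    nlinarith [mul_nonneg (mul_nonneg (by positivity : (0:ℝ) ≤ 4 * π ^ 2) hC0) hRnn]
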